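/- Let S, M, A be finite nonempty types, f : S → M, γ ∈ [0,1). For any policy π̄ on the augmented Cheap Talk MDP, the expected discounted return of π̄ (started from initial distribution μ̄(s,m) = μ(s)·[m = f(s)]) equals the expected discounted return of the induced base policy π(a|s) = π̄(a|(s,f(s))) started from μ. In particular, the supremum over augmented policies of the expected return equals the optimal expected return of the base MDP, independently of the choice of f. -/
import Mathlib


/-- State distribution at time `t` induced by policy `π` from initial distribution `μ`. -/
def stateDist {S A : Type} [Fintype S] [Fintype A]
    (P : S → A → S → ℝ) (μ : S → ℝ) (π : S → A → ℝ) : ℕ → S → ℝ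
  | 0 => μ
  | (t + 1) => fun s' => ∑ s, stateDist P μ π t s * ∑ a, π s a * P s a s'

/-- Expected discounted return `E[Σ_t γ^t r_t]` of policy `π`. -/
noncomputable def expReturn {S A : Type} [Fintype S] [Fintype A]
    (γ : ℝ) (P : S → A → S → ℝ) (μ : S → ℝ) (π : S → A → ℝ) (R : S → A → ℝ) : ℝ :=
  ∑' t : ℕ, γ ^ t * ∑ s, stateDist P μ π t s * ∑ a, π s a * R s a

/-- A stochastic policy: nonnegative and summing to one in each state. -/
def IsPolicy {S A : Type} [Fintype A] (π : S → A → ℝ) : Prop :=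
  (∀ s a, 0 ≤ π s a) ∧ ∀ s, ∑ a, π s a = 1

/-- Augmented Cheap Talk kernel `P̄((s',m')|(s,m),a) = P(s'|s,a)·[m' = f s']`. -/
def augKernel {S M A : Type} [DecidableEq M] (P : S → A → S → ℝ) (f : S → M) :
    S × M → A → S × M → ℝ :=
  fun p a q => if q.2 = f q.1 then P p.1 a q.1 else 0

/-- Augmented initial distribution `μ̄(s,m) = μ(s)·[m = f s]`. -/
def augInit {S M : Type} [DecidableEq M] (μ : S → ℝ) (f : S → M) : S × M → ℝ :=
  fun p => if p.2 = f p.1 then μ p.1 else 0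

/-- Augmented reward `R̄((s,m),a) = R(s,a)`. -/
def augReward {S M A : Type} (R : S → A → ℝ) : S × M → A → ℝ :=
  fun p a => R p.1 a


lemma augDist {S M A : Type} [Fintype S] [Fintype M] [Fintype A] [DecidableEq M]
    (P : S → A → S → ℝ) (μ : S → ℝ) (f : S → M) (πbar : S × M → A → ℝ) :
    ∀ t (s : S) (m : M),
      stateDist (augKernel P f) (augInit μ f) πbar t (s, m) =
        if m = f s then stateDist P μ (fun s a => πbar (s, f s) a) t s else 0 := by
  intro t
  induction t with
  | zero => intro s m; rfl
  | succ t ih =>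
    intro s m
    show (∑ p : S × M, stateDist (augKernel P f) (augInit μ f) πbar t p *
        ∑ a, πbar p a * augKernel P f p a (s, m)) = _
    rw [Fintype.sum_prod_type]
    simp only [ih, augKernel, ite_mul, zero_mul, Finset.sum_ite_eq',
      Finset.mem_univ, if_true]
    by_cases h : m = f s
    · simp only [h, if_true, stateDist]
    · simp [h]

/-- Proposition 2 (full statement): any augmented policy attains exactly the return of its
induced base policy, and the optimal attainable return of the augmented Cheap Talk MDP
equals that of the base MDP, independently of the adversary `f`. -/
theorem cheap_talk_return_correspondence
    {S M A : Type} [Fintype S] [Fintype M] [Fintype A]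
    [Nonempty S] [Nonempty M] [Nonempty A] [DecidableEq M]
    (γ : ℝ) (hγ0 : 0 ≤ γ) (hγ1 : γ < 1)
    (P : S → A → S → ℝ) (hPnn : ∀ s a s', 0 ≤ P s a s') (hP : ∀ s a, ∑ s', P s a s' = 1)
    (μ : S → ℝ) (hμnn : ∀ s, 0 ≤ μ s) (hμ : ∑ s, μ s = 1)
    (R : S → A → ℝ)
    (f : S → M) :
    (∀ πbar : S × M → A → ℝ, IsPolicy πbar →
      expReturn γ (augKernel P f) (augInit μ f) πbar (augReward R) =
        expReturn γ P μ (fun s a => πbar (s, f s) a) R) ∧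
    sSup {x : ℝ | ∃ πbar : S × M → A → ℝ, IsPolicy πbar ∧
        x = expReturn γ (augKernel P f) (augInit μ f) πbar (augReward R)} =
      sSup {x : ℝ | ∃ π : S → A → ℝ, IsPolicy π ∧ x = expReturn γ P μ π R} := by
  have part1 : ∀ πbar : S × M → A → ℝ, IsPolicy πbar →
      expReturn γ (augKernel P f) (augInit μ f) πbar (augReward R) =
        expReturn γ P μ (fun s a => πbar (s, f s) a) R := by
    intro πbar hπ
    unfold expReturn
    refine tsum_congr fun t => ?_
    congr 1
    rw [Fintype.sum_prod_type]
    simp [augDist, augReward, ite_mul, zero_mul, Finset.sum_ite_eq']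
  refine ⟨part1, ?_⟩
  congr 1
  ext x
  constructor
  · rintro ⟨πbar, hπ, rfl⟩
    exact ⟨fun s a => πbar (s, f s) a, ⟨fun s a => hπ.1 _ _, fun s => hπ.2 _⟩,
      part1 πbar hπ⟩
  · rintro ⟨π, hπ, rfl⟩
    have hp : IsPolicy (fun (p : S × M) a => π p.1 a) :=
      ⟨fun p a => hπ.1 _ _, fun p => hπ.2 _⟩
    exact ⟨fun p a => π p.1 a, hp, (part1 _ hp).symm⟩
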